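/- For all integers m, n ≥ 1, the identity u_n·W_{m+1} + q·u_{n−1}·W_m = W_{n+m} holds, where u_n·W_{m+1} denotes scalar multiplication of the quaternion W_{m+1} by the real number u_n. -/

import Mathlib

open Quaternion

theorem stmt4 (p q : ℝ) (w : ℕ → ℝ) (hw : ∀ n, w (n + 2) = p * w (n + 1) + q * w n)
    (W : ℕ → ℍ[ℝ]) (hW : ∀ n, W n = ⟨w n, w (n + 1), w (n + 2), w (n + 3)⟩)
    (u : ℕ → ℝ) (hu : ∀ n, u (n + 2) = p * u (n + 1) + q * u n)
    (hu0 : u 0 = 0) (hu1 : u 1 = 1)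
    (U : ℕ → ℍ[ℝ]) (hU : ∀ n, U n = ⟨u n, u (n + 1), u (n + 2), u (n + 3)⟩)
    (m n : ℕ) (hm : 1 ≤ m) (hn : 1 ≤ n) :
    u n • W (m + 1) + (q * u (n - 1)) • W m = W (n + m) := by
  have key : ∀ k j : ℕ, u (k + 1) * w (j + 1) + q * u k * w j = w (k + 1 + j) := by
    intro k
    induction k using Nat.twoStepInduction with
    | zero => intro j; rw [show 1 + j = j + 1 by omega]; simp [hu0, hu1]
    | one =>
      intro j
      rw [show 1 + 1 + j = j + 2 by omega, hu 0, hw j]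
      simp [hu0, hu1]
    | more k ih1 ih2 =>
      intro j
      have h1 := ih1 j
      have h2 := ih2 j
      rw [show k + 1 + 1 = k + 2 by omega, hu k] at h2
      rw [hu (k + 1), hu k, show k + 2 + 1 + j = (k + 1 + j) + 2 by omega, hw (k + 1 + j),
        show k + 1 + j + 1 = k + 1 + 1 + j by omega]
      linear_combination p * h2 + q * h1
  obtain ⟨k, rfl⟩ : ∃ k, n = k + 1 := ⟨n - 1, (Nat.succ_pred_eq_of_pos hn).symm⟩
  simp only [Nat.add_sub_cancel]
  rw [hW (m + 1), hW m, hW (k + 1 + m)]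
  ext <;> simp [Quaternion.re_smul, Quaternion.imI_smul, Quaternion.imJ_smul, Quaternion.imK_smul,
    smul_eq_mul] <;>
    [exact key k m;
     (have := key k (m + 1); rw [show k + 1 + (m + 1) = k + 1 + m + 1 by ring] at this; exact this);
     (have := key k (m + 2); rw [show k + 1 + (m + 2) = k + 1 + m + 2 by ring] at this; exact this);
     (have := key k (m + 3); rw [show k + 1 + (m + 3) = k + 1 + m + 3 by ring] at this; exact this)]
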